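/- In the same Gaussian model, parallel trends is equivalent to covariance stability of the latent index: with D = 1{η ≥ 0}, E[Y₁₀ − Y₀₀ | D=1] = E[Y₁₀ − Y₀₀ | D=0] if and only if ρ₀σ₀ = ρ₁σ₁. -/

import Mathlib

open Set MeasureTheory

/-- Standard bivariate normal density with correlation `ρ`. -/
noncomputable def binormDensity (ρ x y : ℝ) : ℝ :=
  (2 * Real.pi * Real.sqrt (1 - ρ ^ 2))⁻¹ *
    Real.exp (-(x ^ 2 - 2 * ρ * x * y + y ^ 2) / (2 * (1 - ρ ^ 2)))

/-- Standard bivariate normal cdf `Φ₂(a, b; ρ)`. -/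
noncomputable def Phi2 (a b ρ : ℝ) : ℝ :=
  ∫ x in Iic a, ∫ y in Iic b, binormDensity ρ x y


open Real Filter
open scoped ENNReal NNReal

variable {ρ : ℝ}

lemma odd_gauss {b : ℝ} : ∫ x : ℝ, x * Real.exp (-b * x ^ 2) = 0 := by
  have h := integral_neg_eq_self (fun x : ℝ => x * Real.exp (-b * x ^ 2)) volume
  have h2 : ∫ x : ℝ, -(x * Real.exp (-b * x ^ 2)) = ∫ x : ℝ, x * Real.exp (-b * x ^ 2) := by
    rw [← h]; congr 1 with x; rw [neg_sq]; ring
  rw [integral_neg] at h2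
  linarith

lemma gauss_shift0 {b : ℝ} (m : ℝ) :
    ∫ x : ℝ, Real.exp (-b * (x - m) ^ 2) = Real.sqrt (π / b) := by
  have := integral_add_right_eq_self (μ := volume) (fun x : ℝ => Real.exp (-b * x ^ 2)) (-m)
  simp only [← sub_eq_add_neg] at this
  rw [this, integral_gaussian]

lemma gauss_shift1 {b : ℝ} (hb : 0 < b) (m : ℝ) :
    ∫ x : ℝ, x * Real.exp (-b * (x - m) ^ 2) = m * Real.sqrt (π / b) := by
  have := integral_add_right_eq_self (μ := volume)
    (fun x : ℝ => (x + m) * Real.exp (-b * x ^ 2)) (-m)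
  have h2 : (fun x : ℝ => (x + -m + m) * Real.exp (-b * (x + -m) ^ 2))
      = fun x : ℝ => x * Real.exp (-b * (x - m) ^ 2) := by
    funext x; rw [sub_eq_add_neg]; ring_nf
  rw [h2] at this
  rw [this]
  have hint1 : Integrable (fun x : ℝ => x * Real.exp (-b * x ^ 2)) :=
    integrable_mul_exp_neg_mul_sq hb
  have hint2 : Integrable (fun x : ℝ => m * Real.exp (-b * x ^ 2)) :=
    (integrable_exp_neg_mul_sq hb).const_mul m
  have h3 : (fun x : ℝ => (x + m) * Real.exp (-b * x ^ 2))
      = fun x : ℝ => x * Real.exp (-b * x ^ 2) + m * Real.exp (-b * x ^ 2) := by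
    funext x; ring
  rw [h3, integral_add hint1 hint2, odd_gauss, integral_const_mul, integral_gaussian]
  ring

lemma gauss_Ioi_moment {b : ℝ} (hb : 0 < b) :
    ∫ x in Ioi (0:ℝ), x * Real.exp (-b * x ^ 2) = (2 * b)⁻¹ := by
  have A : ∀ x : ℝ, HasDerivAt (fun x : ℝ => -(2 * b)⁻¹ * Real.exp (-b * x ^ 2))
      (x * Real.exp (-b * x ^ 2)) x := by
    intro x
    convert ((hasDerivAt_pow 2 x).const_mul (-b)).exp.const_mul (-(2 * b)⁻¹) using 1
    · rfl
    · rfl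
    field_simp
    ring
  have B : Tendsto (fun y : ℝ => -(2 * b)⁻¹ * Real.exp (-b * y ^ 2)) atTop
      (nhds (-(2 * b)⁻¹ * 0)) := by
    refine Tendsto.const_mul _ ?_
    refine Real.tendsto_exp_atBot.comp ?_
    exact (tendsto_pow_atTop two_ne_zero).const_mul_atTop_of_neg (neg_lt_zero.2 hb)
  have := integral_Ioi_of_hasDerivAt_of_tendsto' (a := (0:ℝ)) (fun x _ => A x)
    (integrable_mul_exp_neg_mul_sq hb).integrableOn B
  rw [this]
  norm_num

variable {ρ : ℝ}

lemma sqrt_two_pi_pos : (0:ℝ) < Real.sqrt (2 * π) := Real.sqrt_pos.mpr (by positivity)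

lemma const_combine {c : ℝ} (hc : 0 < c) :
    (2 * π * Real.sqrt c)⁻¹ * Real.sqrt (2 * π * c) = (Real.sqrt (2 * π))⁻¹ := by
  have h2π : (0:ℝ) < 2 * π := by positivity
  have hs : Real.sqrt (2 * π * c) = Real.sqrt (2 * π) * Real.sqrt c :=
    Real.sqrt_mul h2π.le c
  have h2 : Real.sqrt (2 * π) * Real.sqrt (2 * π) = 2 * π := Real.mul_self_sqrt h2π.le
  have hsc : Real.sqrt c ≠ 0 := ne_of_gt (Real.sqrt_pos.mpr hc)
  have hsp : Real.sqrt (2 * π) ≠ 0 := ne_of_gt sqrt_two_pi_pos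
  rw [hs]
  have h3 : (2 * π * Real.sqrt c) = Real.sqrt (2*π) * (Real.sqrt (2*π) * Real.sqrt c) := by
    linear_combination (-Real.sqrt c) * h2
  rw [h3, mul_inv, mul_assoc,
    inv_mul_cancel₀ (mul_ne_zero hsp hsc), mul_one]

lemma binorm_factor (hρ : ρ ^ 2 < 1) (x y : ℝ) :
    binormDensity ρ x y = ((2 * π * Real.sqrt (1 - ρ ^ 2))⁻¹ * Real.exp (-(1/2) * y ^ 2)) *
      Real.exp (-(2 * (1 - ρ ^ 2))⁻¹ * (x - ρ * y) ^ 2) := by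
  have hc : (0:ℝ) < 1 - ρ ^ 2 := by linarith
  rw [binormDensity]
  conv_rhs => rw [mul_assoc, ← Real.exp_add]
  congr 1
  field_simp
  ring

lemma binorm_slice_integrable (hρ : ρ ^ 2 < 1) (y : ℝ) :
    Integrable (fun x : ℝ => binormDensity ρ x y) := by
  have hc : (0:ℝ) < 1 - ρ ^ 2 := by linarith
  have hb : (0:ℝ) < (2 * (1 - ρ ^ 2))⁻¹ := by positivity
  have h1 : (fun x : ℝ => binormDensity ρ x y) = fun x =>
      ((2 * π * Real.sqrt (1 - ρ ^ 2))⁻¹ * Real.exp (-(1/2) * y ^ 2)) *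
        (fun u : ℝ => Real.exp (-(2 * (1 - ρ ^ 2))⁻¹ * u ^ 2)) (x + -(ρ * y)) := by
    funext x; rw [binorm_factor hρ, ← sub_eq_add_neg]
  rw [h1]
  exact ((integrable_exp_neg_mul_sq hb).comp_add_right (-(ρ * y))).const_mul _

lemma binorm_slice_mul_integrable (hρ : ρ ^ 2 < 1) (y : ℝ) :
    Integrable (fun x : ℝ => x * binormDensity ρ x y) := by
  have hc : (0:ℝ) < 1 - ρ ^ 2 := by linarith
  have hb : (0:ℝ) < (2 * (1 - ρ ^ 2))⁻¹ := by positivity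
  have base : Integrable (fun u : ℝ => (u + ρ * y) * Real.exp (-(2 * (1 - ρ ^ 2))⁻¹ * u ^ 2))
      volume := by
    have h3 : (fun u : ℝ => (u + ρ * y) * Real.exp (-(2 * (1 - ρ ^ 2))⁻¹ * u ^ 2))
        = fun u : ℝ => u * Real.exp (-(2 * (1 - ρ ^ 2))⁻¹ * u ^ 2)
          + (ρ*y) * Real.exp (-(2 * (1 - ρ ^ 2))⁻¹ * u ^ 2) := by funext u; ring
    rw [h3]
    exact (integrable_mul_exp_neg_mul_sq hb).add ((integrable_exp_neg_mul_sq hb).const_mul _)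
  have h1 : (fun x : ℝ => x * binormDensity ρ x y) = fun x =>
      ((2 * π * Real.sqrt (1 - ρ ^ 2))⁻¹ * Real.exp (-(1/2) * y ^ 2)) *
        ((fun u : ℝ => (u + ρ * y) * Real.exp (-(2 * (1 - ρ ^ 2))⁻¹ * u ^ 2)) (x + -(ρ * y))) := by
    funext x; rw [binorm_factor hρ]; simp only [← sub_eq_add_neg, sub_add_cancel]; ring
  rw [h1]
  exact (base.comp_add_right (-(ρ * y))).const_mul _

lemma binorm_slice_int (hρ : ρ ^ 2 < 1) (y : ℝ) :
    ∫ x : ℝ, binormDensity ρ x y = (Real.sqrt (2 * π))⁻¹ * Real.exp (-(1/2) * y ^ 2) := by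
  have hc : (0:ℝ) < 1 - ρ ^ 2 := by linarith
  simp only [binorm_factor hρ]
  rw [integral_const_mul, gauss_shift0]
  have h1 : π / (2 * (1 - ρ ^ 2))⁻¹ = 2 * π * (1 - ρ^2) := by field_simp
  rw [h1]
  have := const_combine hc
  calc (2 * π * Real.sqrt (1 - ρ ^ 2))⁻¹ * Real.exp (-(1/2) * y ^ 2)
        * Real.sqrt (2 * π * (1 - ρ ^ 2))
      = ((2 * π * Real.sqrt (1 - ρ ^ 2))⁻¹ * Real.sqrt (2 * π * (1 - ρ ^ 2)))
        * Real.exp (-(1/2) * y ^ 2) := by ring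
    _ = (Real.sqrt (2 * π))⁻¹ * Real.exp (-(1/2) * y ^ 2) := by rw [this]

lemma binorm_slice_moment (hρ : ρ ^ 2 < 1) (y : ℝ) :
    ∫ x : ℝ, x * binormDensity ρ x y
      = (ρ * y) * ((Real.sqrt (2 * π))⁻¹ * Real.exp (-(1/2) * y ^ 2)) := by
  have hc : (0:ℝ) < 1 - ρ ^ 2 := by linarith
  have hb : (0:ℝ) < (2 * (1 - ρ ^ 2))⁻¹ := by positivity
  have key : ∀ x : ℝ, x * binormDensity ρ x y =
      ((2 * π * Real.sqrt (1 - ρ ^ 2))⁻¹ * Real.exp (-(1/2) * y ^ 2)) *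
        (x * Real.exp (-(2 * (1 - ρ ^ 2))⁻¹ * (x - ρ * y) ^ 2)) := by
    intro x; rw [binorm_factor hρ]; ring
  simp only [key]
  rw [integral_const_mul, gauss_shift1 hb]
  have h1 : π / (2 * (1 - ρ ^ 2))⁻¹ = 2 * π * (1 - ρ^2) := by field_simp
  rw [h1]
  have := const_combine hc
  calc (2 * π * Real.sqrt (1 - ρ ^ 2))⁻¹ * Real.exp (-(1/2) * y ^ 2)
        * (ρ * y * Real.sqrt (2 * π * (1 - ρ ^ 2)))
      = (ρ * y) * (((2 * π * Real.sqrt (1 - ρ ^ 2))⁻¹ * Real.sqrt (2 * π * (1 - ρ ^ 2)))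
        * Real.exp (-(1/2) * y ^ 2)) := by ring
    _ = (ρ * y) * ((Real.sqrt (2 * π))⁻¹ * Real.exp (-(1/2) * y ^ 2)) := by rw [this]

lemma binorm_nonneg (ρ x y : ℝ) : 0 ≤ binormDensity ρ x y := by
  unfold binormDensity
  positivity

lemma binorm_continuous (ρ : ℝ) : Continuous fun p : ℝ × ℝ => binormDensity ρ p.1 p.2 := by
  unfold binormDensity
  exact continuous_const.mul ((((continuous_fst.pow 2).sub
    (((continuous_const.mul continuous_fst).mul continuous_snd))).add
    (continuous_snd.pow 2)).neg.div_const _).rexp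

lemma binorm_le (hρ : |ρ| < 1) (x y : ℝ) :
    binormDensity ρ x y ≤ (2 * π * Real.sqrt (1 - ρ ^ 2))⁻¹ *
      (Real.exp (-((1 - |ρ|)/(2*(1 - ρ^2))) * x ^ 2) *
        Real.exp (-((1 - |ρ|)/(2*(1 - ρ^2))) * y ^ 2)) := by
  have hc : (0:ℝ) < 1 - ρ ^ 2 := by nlinarith [sq_abs ρ, abs_nonneg ρ]
  unfold binormDensity
  rw [← Real.exp_add]
  refine mul_le_mul_of_nonneg_left ?_ (by positivity)
  refine Real.exp_le_exp.mpr ?_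
  have h1 : 2 * (ρ * (x * y)) ≤ 2 * (|ρ| * (|x| * |y|)) := by
    have := le_abs_self (ρ * (x * y))
    rw [abs_mul, abs_mul] at this
    linarith
  have h2 : 2 * (|x| * |y|) ≤ x ^ 2 + y ^ 2 := by
    nlinarith [sq_nonneg (|x| - |y|), sq_abs x, sq_abs y]
  have h3 : x ^ 2 - 2 * ρ * x * y + y ^ 2 ≥ (1 - |ρ|) * (x ^ 2 + y ^ 2) := by
    nlinarith [abs_nonneg ρ]
  have hrhs : (-((1 - |ρ|)/(2*(1 - ρ^2))) * x ^ 2 + -((1 - |ρ|)/(2*(1 - ρ^2))) * y ^ 2)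
      = -((1 - |ρ|) * (x ^ 2 + y ^ 2)) / (2 * (1 - ρ ^ 2)) := by ring
  rw [hrhs, div_le_div_iff_of_pos_right (show (0:ℝ) < 2 * (1 - ρ ^ 2) by positivity)]
  linarith [h3]

lemma binorm_integrable2 (hρ : |ρ| < 1) :
    Integrable (fun p : ℝ × ℝ => binormDensity ρ p.1 p.2) (volume.prod volume) := by
  have hc : (0:ℝ) < 1 - ρ ^ 2 := by nlinarith [sq_abs ρ, abs_nonneg ρ]
  have ha : (0:ℝ) < (1 - |ρ|)/(2*(1 - ρ^2)) := by
    have : (0:ℝ) < 1 - |ρ| := by linarith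
    positivity
  have hg : Integrable (fun p : ℝ × ℝ =>
      (2 * π * Real.sqrt (1 - ρ ^ 2))⁻¹ *
      (Real.exp (-((1 - |ρ|)/(2*(1 - ρ^2))) * p.1 ^ 2) *
        Real.exp (-((1 - |ρ|)/(2*(1 - ρ^2))) * p.2 ^ 2))) (volume.prod volume) :=
    ((integrable_exp_neg_mul_sq ha).mul_prod (integrable_exp_neg_mul_sq ha)).const_mul _
  refine Integrable.mono' hg ((binorm_continuous ρ).aestronglyMeasurable) ?_
  refine Filter.Eventually.of_forall fun p => ?_
  rw [Real.norm_eq_abs, abs_of_nonneg (binorm_nonneg _ _ _)]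
  exact binorm_le hρ p.1 p.2

lemma binorm_mul_integrable2 (hρ : |ρ| < 1) :
    Integrable (fun p : ℝ × ℝ => p.1 * binormDensity ρ p.1 p.2) (volume.prod volume) := by
  have hc : (0:ℝ) < 1 - ρ ^ 2 := by nlinarith [sq_abs ρ, abs_nonneg ρ]
  have ha : (0:ℝ) < (1 - |ρ|)/(2*(1 - ρ^2)) := by
    have : (0:ℝ) < 1 - |ρ| := by linarith
    positivity
  have hg1 : Integrable (fun x : ℝ => |x * Real.exp (-((1 - |ρ|)/(2*(1 - ρ^2))) * x ^ 2)|) :=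
    (integrable_mul_exp_neg_mul_sq ha).abs
  have hg : Integrable (fun p : ℝ × ℝ =>
      (2 * π * Real.sqrt (1 - ρ ^ 2))⁻¹ *
      (|p.1 * Real.exp (-((1 - |ρ|)/(2*(1 - ρ^2))) * p.1 ^ 2)| *
        Real.exp (-((1 - |ρ|)/(2*(1 - ρ^2))) * p.2 ^ 2))) (volume.prod volume) :=
    (hg1.mul_prod (integrable_exp_neg_mul_sq ha)).const_mul _
  have hm : AEStronglyMeasurable (fun p : ℝ × ℝ => p.1 * binormDensity ρ p.1 p.2)
      (volume.prod volume) :=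
    (continuous_fst.mul (binorm_continuous ρ)).aestronglyMeasurable
  refine Integrable.mono' hg hm ?_
  refine Filter.Eventually.of_forall fun p => ?_
  rw [Real.norm_eq_abs, abs_mul, abs_of_nonneg (binorm_nonneg _ _ _), abs_mul,
    Real.abs_exp]
  calc |p.1| * binormDensity ρ p.1 p.2
      ≤ |p.1| * ((2 * π * Real.sqrt (1 - ρ ^ 2))⁻¹ *
        (Real.exp (-((1 - |ρ|)/(2*(1 - ρ^2))) * p.1 ^ 2) *
          Real.exp (-((1 - |ρ|)/(2*(1 - ρ^2))) * p.2 ^ 2))) :=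
        mul_le_mul_of_nonneg_left (binorm_le hρ p.1 p.2) (abs_nonneg _)
    _ = (2 * π * Real.sqrt (1 - ρ ^ 2))⁻¹ *
        (|p.1| * Real.exp (-((1 - |ρ|)/(2*(1 - ρ^2))) * p.1 ^ 2) *
          Real.exp (-((1 - |ρ|)/(2*(1 - ρ^2))) * p.2 ^ 2)) := by ring

lemma reduction {f : ℝ × ℝ → ℝ} (hf : Integrable f (volume.prod volume))
    {t : Set ℝ} (ht : MeasurableSet t) :
    ∫ p in univ ×ˢ t, f p ∂(volume.prod volume) = ∫ y in t, ∫ x, f (x, y) := by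
  have h1 : ((volume : Measure ℝ).prod (volume : Measure ℝ)).restrict (univ ×ˢ t)
      = ((volume : Measure ℝ).restrict univ).prod ((volume : Measure ℝ).restrict t) :=
    (Measure.prod_restrict (univ : Set ℝ) t).symm
  rw [h1]; simp only [Measure.restrict_univ]
  have hf' : Integrable f (volume.prod (volume.restrict t)) := by
    have h2 := hf.restrict (s := univ ×ˢ t)
    rw [h1] at h2; simpa only [Measure.restrict_univ] using h2
  exact integral_prod_symm f hf' 

lemma phi_integrable : Integrable (fun y : ℝ =>
    (Real.sqrt (2*π))⁻¹ * Real.exp (-(1/2) * y ^ 2)) :=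
  (integrable_exp_neg_mul_sq (by norm_num : (0:ℝ) < 1/2)).const_mul _

lemma pi_div : π / (1/2 : ℝ) = 2 * π := by ring

lemma phi_total : ∫ y : ℝ, (Real.sqrt (2*π))⁻¹ * Real.exp (-(1/2) * y ^ 2) = 1 := by
  rw [integral_const_mul, integral_gaussian, pi_div,
    inv_mul_cancel₀ (ne_of_gt sqrt_two_pi_pos)]

lemma phi_Ici : ∫ y in Ici (0:ℝ), (Real.sqrt (2*π))⁻¹ * Real.exp (-(1/2) * y ^ 2) = 1/2 := by
  rw [integral_Ici_eq_integral_Ioi, integral_const_mul, integral_gaussian_Ioi, pi_div]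
  rw [div_eq_mul_inv, ← mul_assoc, inv_mul_cancel₀ (ne_of_gt sqrt_two_pi_pos)]
  norm_num

lemma phimoment_total :
    ∫ y : ℝ, y * ((Real.sqrt (2*π))⁻¹ * Real.exp (-(1/2) * y ^ 2)) = 0 := by
  have h : (fun y : ℝ => y * ((Real.sqrt (2*π))⁻¹ * Real.exp (-(1/2) * y ^ 2)))
      = fun y : ℝ => (Real.sqrt (2*π))⁻¹ * (y * Real.exp (-(1/2) * y ^ 2)) := by
    funext y; ring
  rw [h, integral_const_mul, odd_gauss, mul_zero]

lemma phimoment_Ici :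
    ∫ y in Ici (0:ℝ), y * ((Real.sqrt (2*π))⁻¹ * Real.exp (-(1/2) * y ^ 2))
      = (Real.sqrt (2*π))⁻¹ := by
  have h : (fun y : ℝ => y * ((Real.sqrt (2*π))⁻¹ * Real.exp (-(1/2) * y ^ 2)))
      = fun y : ℝ => (Real.sqrt (2*π))⁻¹ * (y * Real.exp (-(1/2) * y ^ 2)) := by
    funext y; ring
  rw [h, integral_Ici_eq_integral_Ioi, integral_const_mul,
    gauss_Ioi_moment (by norm_num : (0:ℝ) < 1/2)]
  norm_num

lemma sq_lt_one_of_abs (hρ : |ρ| < 1) : ρ ^ 2 < 1 := by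
  nlinarith [sq_abs ρ, abs_nonneg ρ]

lemma R_total (hρ : |ρ| < 1) :
    ∫ p : ℝ × ℝ, binormDensity ρ p.1 p.2 ∂((volume : Measure ℝ).prod volume) = 1 := by
  rw [integral_prod_symm _ (binorm_integrable2 hρ)]
  simp only [binorm_slice_int (sq_lt_one_of_abs hρ)]
  exact phi_total

lemma R_half (hρ : |ρ| < 1) :
    ∫ p in univ ×ˢ Ici (0:ℝ), binormDensity ρ p.1 p.2 ∂((volume : Measure ℝ).prod volume)
      = 1/2 := by
  rw [reduction (binorm_integrable2 hρ) measurableSet_Ici]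
  simp only [binorm_slice_int (sq_lt_one_of_abs hρ)]
  exact phi_Ici

lemma R_moment_total (hρ : |ρ| < 1) :
    ∫ p : ℝ × ℝ, p.1 * binormDensity ρ p.1 p.2 ∂((volume : Measure ℝ).prod volume) = 0 := by
  rw [integral_prod_symm _ (binorm_mul_integrable2 hρ)]
  simp only [binorm_slice_moment (sq_lt_one_of_abs hρ), mul_assoc]
  rw [integral_const_mul, phimoment_total, mul_zero]

lemma R_moment_half (hρ : |ρ| < 1) :
    ∫ p in univ ×ˢ Ici (0:ℝ), p.1 * binormDensity ρ p.1 p.2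
        ∂((volume : Measure ℝ).prod volume)
      = ρ * (Real.sqrt (2*π))⁻¹ := by
  rw [reduction (binorm_mul_integrable2 hρ) measurableSet_Ici]
  simp only [binorm_slice_moment (sq_lt_one_of_abs hρ), mul_assoc]
  rw [integral_const_mul, phimoment_Ici]

noncomputable def binormMeasure (ρ : ℝ) : Measure (ℝ × ℝ) :=
  ((volume : Measure ℝ).prod volume).withDensity
    (fun p => ENNReal.ofReal (binormDensity ρ p.1 p.2))

lemma binormMeasure_apply (hρ : |ρ| < 1) {s : Set (ℝ × ℝ)} (hs : MeasurableSet s) :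
    binormMeasure ρ s
      = ENNReal.ofReal (∫ p in s, binormDensity ρ p.1 p.2 ∂((volume : Measure ℝ).prod volume)) := by
  rw [binormMeasure, withDensity_apply _ hs]
  exact (ofReal_integral_eq_lintegral_ofReal ((binorm_integrable2 hρ).integrableOn)
    (Filter.Eventually.of_forall fun p => binorm_nonneg ρ p.1 p.2)).symm

lemma binormMeasure_univ (hρ : |ρ| < 1) : binormMeasure ρ univ = 1 := by
  rw [binormMeasure_apply hρ MeasurableSet.univ, Measure.restrict_univ, R_total hρ,
    ENNReal.ofReal_one]

lemma binormMeasure_prob (hρ : |ρ| < 1) : IsProbabilityMeasure (binormMeasure ρ) :=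
  ⟨binormMeasure_univ hρ⟩

lemma binormMeasure_rect (hρ : |ρ| < 1) (a b : ℝ) :
    binormMeasure ρ (Iic a ×ˢ Iic b) = ENNReal.ofReal (Phi2 a b ρ) := by
  rw [binormMeasure_apply hρ (measurableSet_Iic.prod measurableSet_Iic),
    setIntegral_prod _ ((binorm_integrable2 hρ).integrableOn)]
  rfl

lemma isCountablySpanning_Iic : IsCountablySpanning (range (Iic : ℝ → Set ℝ)) := by
  refine ⟨fun n => Iic (n : ℝ), fun n => ⟨(n : ℝ), rfl⟩, ?_⟩
  ext x
  simp only [mem_iUnion, mem_Iic, mem_univ, iff_true]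
  exact exists_nat_ge x

lemma measure_eq_binorm (hρ : |ρ| < 1) {ν : Measure (ℝ × ℝ)} [IsProbabilityMeasure ν]
    (h : ∀ a b : ℝ, ν (Iic a ×ˢ Iic b) = ENNReal.ofReal (Phi2 a b ρ)) :
    ν = binormMeasure ρ := by
  have hC : MeasurableSpace.generateFrom (range (Iic : ℝ → Set ℝ))
      = (inferInstance : MeasurableSpace ℝ) :=
    (borel_eq_generateFrom_Iic ℝ).symm.trans BorelSpace.measurable_eq.symm
  have hgen : (inferInstance : MeasurableSpace (ℝ × ℝ)) = MeasurableSpace.generateFrom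
      (image2 (· ×ˢ ·) (range (Iic : ℝ → Set ℝ)) (range (Iic : ℝ → Set ℝ))) :=
    (generateFrom_eq_prod hC hC isCountablySpanning_Iic isCountablySpanning_Iic).symm
  haveI := binormMeasure_prob hρ
  refine ext_of_generate_finite _ hgen (isPiSystem_Iic.prod isPiSystem_Iic) ?_ ?_
  · rintro s ⟨s1, ⟨a, rfl⟩, s2, ⟨b, rfl⟩, rfl⟩
    rw [h a b, binormMeasure_rect hρ a b]
  · rw [measure_univ, measure_univ]

lemma integral_binormMeasure (hρ : |ρ| < 1) {s : Set (ℝ × ℝ)} (hs : MeasurableSet s)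
    (g : ℝ × ℝ → ℝ) :
    ∫ p in s, g p ∂(binormMeasure ρ)
      = ∫ p in s, binormDensity ρ p.1 p.2 * g p ∂((volume : Measure ℝ).prod volume) := by
  have hmeas : Measurable fun p : ℝ × ℝ => (binormDensity ρ p.1 p.2).toNNReal :=
    (binorm_continuous ρ).measurable.real_toNNReal
  have heq : (fun p : ℝ × ℝ => ENNReal.ofReal (binormDensity ρ p.1 p.2))
      = fun p : ℝ × ℝ => ((binormDensity ρ p.1 p.2).toNNReal : ℝ≥0∞) := rfl
  rw [binormMeasure, heq, restrict_withDensity hs,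
    integral_withDensity_eq_integral_smul hmeas]
  congr 1 with p
  rw [NNReal.smul_def, Real.coe_toNNReal _ (binorm_nonneg ρ p.1 p.2), smul_eq_mul]

lemma key {Ω : Type*} [MeasurableSpace Ω] (μ : Measure Ω) [IsProbabilityMeasure μ]
    (Y η : Ω → ℝ) (hY : Measurable Y) (hη : Measurable η) (σ ρ : ℝ) (hσ : 0 < σ)
    (hρ : |ρ| < 1)
    (hjoint : ∀ y z : ℝ, (μ {ω | Y ω ≤ y ∧ η ω ≤ z}).toReal = Phi2 (y / σ) z ρ) :
    μ {ω | 0 ≤ η ω} = ENNReal.ofReal (1/2)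
    ∧ (∫ ω in {ω | 0 ≤ η ω}, Y ω ∂μ) = σ * (ρ * (Real.sqrt (2*π))⁻¹)
    ∧ (∫ ω, Y ω ∂μ) = 0 := by
  set T : Ω → ℝ × ℝ := fun ω => (Y ω / σ, η ω) with hTdef
  have hT : Measurable T := (hY.div_const σ).prodMk hη
  haveI : IsProbabilityMeasure (μ.map T) := Measure.isProbabilityMeasure_map hT.aemeasurable
  have hrect : ∀ a b : ℝ, (μ.map T) (Iic a ×ˢ Iic b) = ENNReal.ofReal (Phi2 a b ρ) := by
    intro a b
    rw [Measure.map_apply hT (measurableSet_Iic.prod measurableSet_Iic)]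
    have hset : T ⁻¹' (Iic a ×ˢ Iic b) = {ω | Y ω ≤ a * σ ∧ η ω ≤ b} := by
      ext ω
      simp only [hTdef, mem_preimage, mem_prod, mem_Iic, mem_setOf_eq]
      constructor
      · rintro ⟨h1, h2⟩; exact ⟨(div_le_iff₀ hσ).mp h1, h2⟩
      · rintro ⟨h1, h2⟩; exact ⟨(div_le_iff₀ hσ).mpr h1, h2⟩
    have hj := hjoint (a * σ) b
    rw [mul_div_cancel_right₀ a hσ.ne'] at hj
    rw [hset, ← hj, ENNReal.ofReal_toReal (measure_ne_top μ _)]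
  have hmap : μ.map T = binormMeasure ρ := measure_eq_binorm hρ hrect
  have hS : MeasurableSet (univ ×ˢ Ici (0:ℝ)) := (MeasurableSet.univ (α := ℝ)).prod measurableSet_Ici
  have hpre : T ⁻¹' (univ ×ˢ Ici (0:ℝ)) = {ω | 0 ≤ η ω} := by
    ext ω; simp [hTdef]
  have hfm : AEStronglyMeasurable (fun p : ℝ × ℝ => σ * p.1) (μ.map T) :=
    (continuous_const.mul continuous_fst).aestronglyMeasurable
  have hcongr : ∀ ω, σ * (Y ω / σ) = Y ω := fun ω => by
    rw [mul_comm, div_mul_cancel₀ _ hσ.ne']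
  refine ⟨?_, ?_, ?_⟩
  · rw [← hpre, ← Measure.map_apply hT hS, hmap, binormMeasure_apply hρ hS, R_half hρ]
  · have step1 : ∫ p in univ ×ˢ Ici (0:ℝ), σ * p.1 ∂(μ.map T)
        = ∫ ω in {ω | 0 ≤ η ω}, Y ω ∂μ := by
      rw [setIntegral_map hS hfm hT.aemeasurable, hpre]
      exact integral_congr_ae (Filter.Eventually.of_forall fun ω => hcongr ω)
    have step2 : ∫ p in univ ×ˢ Ici (0:ℝ), σ * p.1 ∂(μ.map T)
        = σ * (ρ * (Real.sqrt (2*π))⁻¹) := by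
      rw [hmap, integral_binormMeasure hρ hS]
      have hre : (fun p : ℝ × ℝ => binormDensity ρ p.1 p.2 * (σ * p.1))
          = fun p : ℝ × ℝ => σ * (p.1 * binormDensity ρ p.1 p.2) := by
        funext p; ring
      rw [hre, integral_const_mul, R_moment_half hρ]
    rw [← step1, step2]
  · have step1 : ∫ p : ℝ × ℝ, σ * p.1 ∂(μ.map T) = ∫ ω, Y ω ∂μ := by
      rw [integral_map hT.aemeasurable hfm]
      exact integral_congr_ae (Filter.Eventually.of_forall fun ω => hcongr ω)
    have step2 : ∫ p : ℝ × ℝ, σ * p.1 ∂(μ.map T) = 0 := by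
      rw [hmap, ← setIntegral_univ, integral_binormMeasure hρ MeasurableSet.univ]
      have hre : (fun p : ℝ × ℝ => binormDensity ρ p.1 p.2 * (σ * p.1))
          = fun p : ℝ × ℝ => σ * (p.1 * binormDensity ρ p.1 p.2) := by
        funext p; ring
      rw [hre, setIntegral_univ, integral_const_mul, R_moment_total hρ, mul_zero]
    rw [← step1, step2]

/-- in the Gaussian model with `(Y_{t0}, η)` bivariate normal,
`Y_{t0} ~ N(0, σ_t²)`, `η ~ N(0,1)`, `Corr(Y_{t0}, η) = ρ_t`, and `D = 1{η ≥ 0}`,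
parallel trends `E[Y₁₀ − Y₀₀ | D=1] = E[Y₁₀ − Y₀₀ | D=0]` holds iff
`ρ₀σ₀ = ρ₁σ₁`. -/
theorem gaussian_parallel_trends_iff
    {Ω : Type*} [MeasurableSpace Ω] (μ : Measure Ω) [IsProbabilityMeasure μ]
    (Y00 Y10 η : Ω → ℝ)
    (hY00 : Measurable Y00) (hY10 : Measurable Y10) (hη : Measurable η)
    (σ0 σ1 ρ0 ρ1 : ℝ) (hσ0 : 0 < σ0) (hσ1 : 0 < σ1)
    (hρ0 : ρ0 ∈ Ioo (-1:ℝ) 1) (hρ1 : ρ1 ∈ Ioo (-1:ℝ) 1)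
    (hjoint0 : ∀ y z : ℝ,
      (μ {ω | Y00 ω ≤ y ∧ η ω ≤ z}).toReal = Phi2 (y / σ0) z ρ0)
    (hjoint1 : ∀ y z : ℝ,
      (μ {ω | Y10 ω ≤ y ∧ η ω ≤ z}).toReal = Phi2 (y / σ1) z ρ1)
    (hint0 : Integrable Y00 μ) (hint1 : Integrable Y10 μ) :
    ((∫ ω in {ω | 0 ≤ η ω}, (Y10 ω - Y00 ω) ∂μ) / (μ {ω | 0 ≤ η ω}).toReal
      = (∫ ω in {ω | η ω < 0}, (Y10 ω - Y00 ω) ∂μ) / (μ {ω | η ω < 0}).toReal)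
    ↔ ρ0 * σ0 = ρ1 * σ1 := by
  have habs0 : |ρ0| < 1 := abs_lt.mpr ⟨hρ0.1, hρ0.2⟩
  have habs1 : |ρ1| < 1 := abs_lt.mpr ⟨hρ1.1, hρ1.2⟩
  obtain ⟨hP0, hI0, hT0⟩ := key μ Y00 η hY00 hη σ0 ρ0 hσ0 habs0 hjoint0
  obtain ⟨_, hI1, hT1⟩ := key μ Y10 η hY10 hη σ1 ρ1 hσ1 habs1 hjoint1
  set s : ℝ := (Real.sqrt (2*π))⁻¹ with hsdef
  have hs : s ≠ 0 := inv_ne_zero (ne_of_gt sqrt_two_pi_pos)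
  have hSmeas : MeasurableSet {ω | 0 ≤ η ω} := measurableSet_le measurable_const hη
  have hcompl : {ω | η ω < 0} = {ω | 0 ≤ η ω}ᶜ := by
    ext ω; simp [not_le]
  have hPneg : μ {ω | η ω < 0} = ENNReal.ofReal (1/2) := by
    rw [hcompl, measure_compl hSmeas (measure_ne_top μ _), measure_univ, hP0]
    rw [← ENNReal.ofReal_one, ← ENNReal.ofReal_sub _ (by norm_num)]
    norm_num
  have htR : (μ {ω | 0 ≤ η ω}).toReal = 1/2 := by
    rw [hP0, ENNReal.toReal_ofReal (by norm_num)]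
  have htRn : (μ {ω | η ω < 0}).toReal = 1/2 := by
    rw [hPneg, ENNReal.toReal_ofReal (by norm_num)]
  have h0c : ∫ ω in {ω | η ω < 0}, Y00 ω ∂μ = -(σ0 * (ρ0 * s)) := by
    have h := integral_add_compl hSmeas hint0
    rw [hT0, hI0] at h
    rw [hcompl]
    linarith
  have h1c : ∫ ω in {ω | η ω < 0}, Y10 ω ∂μ = -(σ1 * (ρ1 * s)) := by
    have h := integral_add_compl hSmeas hint1
    rw [hT1, hI1] at h
    rw [hcompl]
    linarith
  have hNplus : ∫ ω in {ω | 0 ≤ η ω}, (Y10 ω - Y00 ω) ∂μ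
      = σ1 * (ρ1 * s) - σ0 * (ρ0 * s) := by
    rw [integral_sub hint1.integrableOn hint0.integrableOn, hI1, hI0]
  have hNminus : ∫ ω in {ω | η ω < 0}, (Y10 ω - Y00 ω) ∂μ
      = -(σ1 * (ρ1 * s)) - -(σ0 * (ρ0 * s)) := by
    rw [integral_sub hint1.integrableOn hint0.integrableOn, h1c, h0c]
  rw [hNplus, hNminus, htR, htRn]
  constructor
  · intro h
    rw [div_eq_div_iff (by norm_num) (by norm_num)] at h
    have h2 : (σ1 * ρ1 - σ0 * ρ0) * s = 0 := by nlinarith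
    rcases mul_eq_zero.mp h2 with h3 | h3
    · nlinarith
    · exact absurd h3 hs
  · intro h
    have h2 : σ1 * (ρ1 * s) = σ0 * (ρ0 * s) := by
      rw [show σ1 * (ρ1 * s) = (ρ1 * σ1) * s by ring,
        show σ0 * (ρ0 * s) = (ρ0 * σ0) * s by ring, h]
    rw [h2]
    ring_nf
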